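/- Let n ≥ k > 2, let 𝔽 be a field, let S_k ⊆ C([n],k), and let H be a hyperplane of the simplicial matroid Sim_k^n(S_k). Then H is a modular flat of Sim_k^n(S_k) if and only if |S_k ∖ H| = 1. -/

import Mathlib

/-!
Common definitions for simplicial matroids, following Cordovil–Lemos–Linhares Sales,
"Dirac's theorem on simplicial matroids".

We model `[n] = {1,…,n}` by `Fin n`, and a subset of `[n]` by a `Finset (Fin n)`.
A family `S_k ⊆ C([n],k)` is a `Finset (Finset (Fin n))` (all of whose members
have cardinality `k`, which is imposed by hypotheses in the theorems).
-/

open Finset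

/-- The incidence number `[F' : F]`: if `F = i₁ < i₂ < ⋯ < iₘ` and `F' = F \ {iⱼ}`
then `[F' : F] = (-1)ʲ` (with `j` the 1-based position of the deleted element),
and `[F' : F] = 0` otherwise. -/
def inc {n : ℕ} (F' F : Finset (Fin n)) : ℤ :=
  ∑ i ∈ F, if F' = F.erase i then (-1 : ℤ) ^ (F.filter (fun j => j ≤ i)).card else 0

/-- The family `C([n], m)` of `m`-element subsets of `[n]`, as a type. -/
abbrev Csets (n m : ℕ) := {F : Finset (Fin n) // F.card = m}

/-- `∂_k F`, the boundary of a single `k`-subset `F` of `[n]`,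
as a vector of `𝔽^{C([n],k-1)}`. -/
def bvec (𝔽 : Type*) [Field 𝔽] (n k : ℕ) (F : Finset (Fin n)) : Csets n (k - 1) → 𝔽 :=
  fun F' => ((inc F'.1 F : ℤ) : 𝔽)

/-- Independence in the simplicial matroid `Sim_k^n(S_k)` over `𝔽`:
`X ⊆ S_k` is independent iff the vectors `∂_k F`, `F ∈ X`, are linearly independent. -/
def SimIndep (𝔽 : Type*) [Field 𝔽] (n k : ℕ) (Sk X : Finset (Finset (Fin n))) : Prop :=
  X ⊆ Sk ∧ LinearIndependent 𝔽 (fun F : X => bvec 𝔽 n k F.1)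

/-- A circuit of `Sim_k^n(S_k)`: a minimal dependent subset of the ground set. -/
def SimCircuit (𝔽 : Type*) [Field 𝔽] (n k : ℕ) (Sk C : Finset (Finset (Fin n))) : Prop :=
  C ⊆ Sk ∧ ¬ LinearIndependent 𝔽 (fun F : C => bvec 𝔽 n k F.1) ∧
    ∀ C' ⊂ C, LinearIndependent 𝔽 (fun F : C' => bvec 𝔽 n k F.1)

/-- The rank (in `Sim_k^n`) of a set `X` of `k`-subsets of `[n]`:
the dimension of the span of the boundaries of its members. -/
noncomputable def simRank (𝔽 : Type*) [Field 𝔽] (n k : ℕ) (X : Finset (Finset (Fin n))) : ℕ :=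
  Module.finrank 𝔽 (Submodule.span 𝔽 ((fun F => bvec 𝔽 n k F) '' (X : Set (Finset (Fin n)))))

/-- A cocircuit of `Sim_k^n(S_k)`, i.e. a circuit of the dual matroid:
a minimal set `C ⊆ S_k` whose complement does not span (`X` is independent in the dual
matroid iff `r(E ∖ X) = r(E)`). -/
def SimCocircuit (𝔽 : Type*) [Field 𝔽] (n k : ℕ) (Sk C : Finset (Finset (Fin n))) : Prop :=
  C ⊆ Sk ∧ simRank 𝔽 n k (Sk \ C) < simRank 𝔽 n k Sk ∧
    ∀ C' ⊂ C, simRank 𝔽 n k (Sk \ C') = simRank 𝔽 n k Sk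

/-- The boundary map `∂_k : 𝔽^{S_k} → 𝔽^{C([n],k-1)}`. -/
noncomputable def bdryMap (𝔽 : Type*) [Field 𝔽] (n k : ℕ) (Sk : Finset (Finset (Fin n))) :
    (↥Sk → 𝔽) →ₗ[𝔽] (Csets n (k - 1) → 𝔽) :=
  Matrix.mulVecLin (Matrix.of fun (F' : Csets n (k - 1)) (F : ↥Sk) => ((inc F'.1 F.1 : ℤ) : 𝔽))

/-- The coboundary `δ^{k-1} V` of a `(k-1)`-subset `V` of `[n]`,
as a vector of `𝔽^{S_k}`; its `F`-coordinate is `[V : F]`. -/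
def cobdry (𝔽 : Type*) [Field 𝔽] {n : ℕ} (Sk : Finset (Finset (Fin n)))
    (V : Finset (Fin n)) : ↥Sk → 𝔽 :=
  fun F => ((inc V F.1 : ℤ) : 𝔽)

/-- The boundary `∂_{k+1} X` of a `(k+1)`-subset `X` of `[n]`, regarded as a vector
of `𝔽^{S_k}`; its `F`-coordinate is `[F : X]`. -/
def pbdry (𝔽 : Type*) [Field 𝔽] {n : ℕ} (Sk : Finset (Finset (Fin n)))
    (X : Finset (Fin n)) : ↥Sk → 𝔽 :=
  fun F => ((inc F.1 X : ℤ) : 𝔽)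

open scoped Classical in
/-- The support of a vector of `𝔽^{S_k}`, as a set of `k`-subsets of `[n]`. -/
noncomputable def suppFin {𝔽 : Type*} [Field 𝔽] {n : ℕ} {Sk : Finset (Finset (Fin n))}
    (v : ↥Sk → 𝔽) : Finset (Finset (Fin n)) :=
  (Sk.attach.filter fun F => v F ≠ 0).image Subtype.val

/-- `supp(δ^{k-1} V) ⊆ S_k`. -/
noncomputable def suppδ (𝔽 : Type*) [Field 𝔽] {n : ℕ} (Sk : Finset (Finset (Fin n)))
    (V : Finset (Fin n)) : Finset (Finset (Fin n)) :=
  suppFin (cobdry 𝔽 Sk V)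

/-- The cocircuit space of `Sim_k^n(S_k)`: the orthogonal complement, with respect to the
standard bilinear form on `𝔽^{S_k}`, of the circuit space `ker ∂_k`. -/
noncomputable def cocircSpace (𝔽 : Type*) [Field 𝔽] (n k : ℕ) (Sk : Finset (Finset (Fin n))) :
    Submodule 𝔽 (↥Sk → 𝔽) where
  carrier := {w | ∀ v ∈ LinearMap.ker (bdryMap 𝔽 n k Sk), ∑ F, v F * w F = 0}
  zero_mem' := by intro v hv; simp
  add_mem' := by
    intro a b ha hb v hv
    have h1 := ha v hv
    have h2 := hb v hv
    simp only [Pi.add_apply, mul_add, Finset.sum_add_distrib]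
    rw [h1, h2, add_zero]
  smul_mem' := by
    intro c w hw v hv
    have h := hw v hv
    simp only [Pi.smul_apply, smul_eq_mul]
    calc ∑ F, v F * (c * w F) = ∑ F, c * (v F * w F) := by
          exact Finset.sum_congr rfl fun F _ => by ring
      _ = c * ∑ F, v F * w F := (Finset.mul_sum _ _ _).symm
      _ = 0 := by rw [h, mul_zero]

/-- The faces of the `k`-hyperclique complex `⟨S_k⟩`: all `F ⊆ [n]` with `|F| < k`,
together with all `F` every `k`-element subset of which lies in `S_k`. -/
def IsFace {n : ℕ} (k : ℕ) (Sk : Finset (Finset (Fin n))) (F : Finset (Fin n)) : Prop :=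
  F.card < k ∨ ∀ G ⊆ F, G.card = k → G ∈ Sk

/-- A facet of `⟨S_k⟩`: an inclusion-maximal face. -/
def IsFacet {n : ℕ} (k : ℕ) (Sk : Finset (Finset (Fin n))) (F : Finset (Fin n)) : Prop :=
  IsFace k Sk F ∧ ∀ G, IsFace k Sk G → F ⊆ G → F = G

/-- `V` is simplicial in `⟨S_k⟩` if there is exactly one facet `X` of `⟨S_k⟩`
with `V ⊊ X`. -/
def SimplicialFace {n : ℕ} (k : ℕ) (Sk : Finset (Finset (Fin n))) (V : Finset (Fin n)) : Prop :=
  ∃! X, IsFacet k Sk X ∧ V ⊂ X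

/-- The `k`-skeleta of the complexes `Δ_0 = ⟨S_k⟩`, `Δ_{j+1} = Δ_j ∖∖ V_j`, where
`Δ ∖∖ V = ⟨(skeleton of Δ) ∖ supp(δ^{k-1} V)⟩` (0-indexed). -/
noncomputable def delSeq (𝔽 : Type*) [Field 𝔽] {n : ℕ} (Sk : Finset (Finset (Fin n)))
    (V : ℕ → Finset (Fin n)) : ℕ → Finset (Finset (Fin n))
  | 0 => Sk
  | j + 1 => delSeq 𝔽 Sk V j \ suppδ 𝔽 (delSeq 𝔽 Sk V j) (V j)

/-- `C*_j := supp(δ^{k-1} V_j) ∖ ⋃_{i<j} supp(δ^{k-1} V_i)` (0-indexed). -/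
noncomputable def Cstar (𝔽 : Type*) [Field 𝔽] {n : ℕ} (Sk : Finset (Finset (Fin n)))
    (V : ℕ → Finset (Fin n)) (j : ℕ) : Finset (Finset (Fin n)) :=
  suppδ 𝔽 Sk (V j) \ (Finset.range j).biUnion (fun i => suppδ 𝔽 Sk (V i))

/-- `(V_1,…,V_r)` (0-indexed: `V 0, …, V (r-1)`) is a basic linear sequence for `⟨S_k⟩`,
where `r` is the rank of `Sim_k^n(S_k)`: each `V_j` is a `(k-1)`-subset of `[n]` and each
`C*_j` is a cocircuit of `Sim_k^n(S_k(Δ_{j-1}))`. -/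
def BasicLinearSeq (𝔽 : Type*) [Field 𝔽] (n k : ℕ) (Sk : Finset (Finset (Fin n))) (r : ℕ)
    (V : ℕ → Finset (Fin n)) : Prop :=
  simRank 𝔽 n k Sk = r ∧ (∀ j < r, (V j).card = k - 1) ∧
    ∀ j < r, SimCocircuit 𝔽 n k (delSeq 𝔽 Sk V j) (Cstar 𝔽 Sk V j)

/-- `⟨S_k⟩` is D-perfect: there is a basic linear sequence `V_1,…,V_r` such that each `V_j`
is simplicial in `Δ_{j-1}`. -/
def DPerfect (𝔽 : Type*) [Field 𝔽] (n k : ℕ) (Sk : Finset (Finset (Fin n))) : Prop :=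
  ∃ V : ℕ → Finset (Fin n),
    BasicLinearSeq 𝔽 n k Sk (simRank 𝔽 n k Sk) V ∧
      ∀ j < simRank 𝔽 n k Sk, SimplicialFace k (delSeq 𝔽 Sk V j) (V j)

/-- A flat of `Sim_k^n(S_k)`: a closed subset of the ground set. -/
def SimFlat (𝔽 : Type*) [Field 𝔽] (n k : ℕ) (Sk X : Finset (Finset (Fin n))) : Prop :=
  X ⊆ Sk ∧ ∀ F ∈ Sk,
    bvec 𝔽 n k F ∈ Submodule.span 𝔽 ((fun G => bvec 𝔽 n k G) '' (X : Set (Finset (Fin n)))) →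
      F ∈ X

/-- A hyperplane of `Sim_k^n(S_k)`: a flat of rank one less than the rank of the matroid. -/
def SimHyperplane (𝔽 : Type*) [Field 𝔽] (n k : ℕ) (Sk H : Finset (Finset (Fin n))) : Prop :=
  SimFlat 𝔽 n k Sk H ∧ simRank 𝔽 n k H + 1 = simRank 𝔽 n k Sk

/-- A modular flat of `Sim_k^n(S_k)`:
`r(X) + r(Y) = r(X ∪ Y) + r(X ∩ Y)` for every flat `Y`. -/
def ModularFlat (𝔽 : Type*) [Field 𝔽] (n k : ℕ) (Sk X : Finset (Finset (Fin n))) : Prop :=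
  SimFlat 𝔽 n k Sk X ∧ ∀ Y, SimFlat 𝔽 n k Sk Y →
    simRank 𝔽 n k X + simRank 𝔽 n k Y = simRank 𝔽 n k (X ∪ Y) + simRank 𝔽 n k (X ∩ Y)

open scoped Classical in
/-- The closure of `X` in `Sim_k^n(S_k)`. -/
noncomputable def simClosure (𝔽 : Type*) [Field 𝔽] (n k : ℕ)
    (Sk X : Finset (Finset (Fin n))) : Finset (Finset (Fin n)) :=
  Sk.filter fun F =>
    bvec 𝔽 n k F ∈ Submodule.span 𝔽 ((fun G => bvec 𝔽 n k G) '' (X : Set (Finset (Fin n))))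

/-- `Sim_k^n(S_k)` is supersolvable: it admits a maximal chain of modular flats
`cl(∅) = X_0 ⊊ X_1 ⊊ ⋯ ⊊ X_r = S_k`, `r` the rank. -/
def Supersolvable (𝔽 : Type*) [Field 𝔽] (n k : ℕ) (Sk : Finset (Finset (Fin n))) : Prop :=
  ∃ X : ℕ → Finset (Finset (Fin n)),
    X 0 = simClosure 𝔽 n k Sk ∅ ∧ X (simRank 𝔽 n k Sk) = Sk ∧
      (∀ i < simRank 𝔽 n k Sk, X i ⊂ X (i + 1)) ∧
      ∀ i ≤ simRank 𝔽 n k Sk, ModularFlat 𝔽 n k Sk (X i)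

/-- `H` is a dense hyperplane of `Sim_k^n(ground)`: a hyperplane of the form
`ground ∖ supp(δ^{k-1} V)` for some `(k-1)`-subset `V` simplicial in `⟨ground⟩`. -/
def DenseHyp (𝔽 : Type*) [Field 𝔽] (n k : ℕ) (ground H : Finset (Finset (Fin n))) : Prop :=
  SimHyperplane 𝔽 n k ground H ∧
    ∃ V : Finset (Fin n), V.card = k - 1 ∧ SimplicialFace k ground V ∧
      H = ground \ suppδ 𝔽 ground V

/-- `Sim_k^n(S_k)` is superdense: there is a chain `∅ = X_0 ⊊ X_1 ⊊ ⋯ ⊊ X_r = S_k` of flats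
(`r` the rank) with each `X_i` a dense hyperplane of `Sim_k^n(X_{i+1})`. -/
def Superdense (𝔽 : Type*) [Field 𝔽] (n k : ℕ) (Sk : Finset (Finset (Fin n))) : Prop :=
  ∃ X : ℕ → Finset (Finset (Fin n)),
    X 0 = ∅ ∧ X (simRank 𝔽 n k Sk) = Sk ∧
      (∀ i ≤ simRank 𝔽 n k Sk, SimFlat 𝔽 n k Sk (X i)) ∧
      (∀ i < simRank 𝔽 n k Sk, X i ⊂ X (i + 1)) ∧
      ∀ i < simRank 𝔽 n k Sk, DenseHyp 𝔽 n k (X (i + 1)) (X i)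

/-- `Sim_k^n(S_k)` is triangulable over `𝔽`: the boundaries of the `(k+1)`-faces of `⟨S_k⟩`
span the circuit space `ker ∂_k`. -/
def Triangulable (𝔽 : Type*) [Field 𝔽] (n k : ℕ) (Sk : Finset (Finset (Fin n))) : Prop :=
  Submodule.span 𝔽
      {v : ↥Sk → 𝔽 | ∃ X : Finset (Fin n), X.card = k + 1 ∧ IsFace k Sk X ∧ v = pbdry 𝔽 Sk X}
    = LinearMap.ker (bdryMap 𝔽 n k Sk)

/-- `Sim_k^n(S_k)` is strongly triangulable over `𝔽`: there are `(k+1)`-faces `X_1,…,X_{m'}`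
of `⟨S_k⟩` whose boundaries span `ker ∂_k` and such that every circuit `C` has a
representing vector `C⃗` with support `C` which is a combination, with nonzero coefficients,
of boundaries `∂_{k+1} X_{i_j}` with `⋃_{F ∈ C} F = ⋃_j X_{i_j}`. -/
def StronglyTriangulable (𝔽 : Type*) [Field 𝔽] (n k : ℕ)
    (Sk : Finset (Finset (Fin n))) : Prop :=
  ∃ (m' : ℕ) (Xs : Fin m' → Finset (Fin n)),
    (∀ i, (Xs i).card = k + 1 ∧ IsFace k Sk (Xs i)) ∧
    Submodule.span 𝔽 (Set.range fun i => pbdry 𝔽 Sk (Xs i)) = LinearMap.ker (bdryMap 𝔽 n k Sk) ∧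
    ∀ C, SimCircuit 𝔽 n k Sk C →
      ∃ (s : ℕ) (idx : Fin s → Fin m') (a : Fin s → 𝔽) (Cv : ↥Sk → 𝔽),
        (∀ j, a j ≠ 0) ∧ suppFin Cv = C ∧
        Cv = ∑ j, a j • pbdry 𝔽 Sk (Xs (idx j)) ∧
        C.biUnion id = Finset.univ.biUnion fun j : Fin s => Xs (idx j)

/-- The simple graph `([n], S_2)`. -/
def graphOf {n : ℕ} (S2 : Finset (Finset (Fin n))) : SimpleGraph (Fin n) where
  Adj u v := u ≠ v ∧ ({u, v} : Finset (Fin n)) ∈ S2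
  symm := by
    refine ⟨?_⟩
    intro u v h
    exact ⟨h.1.symm, by rw [Finset.pair_comm]; exact h.2⟩
  loopless := by refine ⟨?_⟩; intro u h; exact h.1 rfl

/-- A simple graph is chordal if every cycle of length at least four has a chord, i.e. an
edge of the graph joining two non-consecutive vertices of the cycle. -/
def Chordal {α : Type*} (G : SimpleGraph α) : Prop :=
  ∀ (v : α) (w : G.Walk v v), w.IsCycle → 4 ≤ w.length →
    ∃ u₁ u₂, u₁ ∈ w.support ∧ u₂ ∈ w.support ∧ G.Adj u₁ u₂ ∧ s(u₁, u₂) ∉ w.edges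

section StmtNineHelpers

variable {𝔽 : Type*} [Field 𝔽] {n k : ℕ}

lemma inc_not_subset {V F : Finset (Fin n)} (h : ¬ V ⊆ F) : inc V F = 0 := by
  simp only [inc]
  apply Finset.sum_eq_zero
  intro i _
  rw [if_neg]
  intro hVe
  exact h (hVe ▸ Finset.erase_subset i F)

lemma inc_erase {F : Finset (Fin n)} {i : Fin n} (hi : i ∈ F) :
    inc (F.erase i) F = (-1) ^ (F.filter (fun j => j ≤ i)).card := by
  simp only [inc]
  rw [Finset.sum_eq_single i]
  · rw [if_pos rfl]
  · intro j hj hji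
    rw [if_neg]
    intro h
    have hj' : j ∈ F.erase i := Finset.mem_erase.2 ⟨hji, hj⟩
    rw [h] at hj'
    exact (Finset.mem_erase.1 hj').1 rfl
  · intro h; exact absurd hi h

lemma span_apply_zero {ι : Type*} (S : Set (ι → 𝔽)) (V : ι)
    (h : ∀ f ∈ S, f V = 0) {x : ι → 𝔽} (hx : x ∈ Submodule.span 𝔽 S) : x V = 0 := by
  have hle : Submodule.span 𝔽 S ≤
      LinearMap.ker (LinearMap.proj (R := 𝔽) (φ := fun _ : ι => 𝔽) V) :=
    Submodule.span_le.2 (fun f hf => h f hf)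
  exact hle hx

lemma bvec_not_mem_span (hk : 2 < k) {T : Finset (Finset (Fin n))} (hT : T.card ≤ 2)
    (hTk : ∀ F ∈ T, F.card = k) {G : Finset (Fin n)} (hG : G.card = k) (hGT : G ∉ T) :
    bvec 𝔽 n k G ∉
      Submodule.span 𝔽 ((fun F => bvec 𝔽 n k F) '' (T : Set (Finset (Fin n)))) := by
  classical
  intro hmem
  set B : Finset (Fin n) := T.biUnion (fun F => G.filter fun i => G.erase i ⊆ F) with hB
  have hBcard : B.card ≤ 2 := by
    calc B.card ≤ ∑ F ∈ T, (G.filter fun i => G.erase i ⊆ F).card := Finset.card_biUnion_le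
    _ ≤ ∑ _F ∈ T, 1 := by
        apply Finset.sum_le_sum
        intro F hF
        apply Finset.card_le_one.2
        intro a ha b hb
        by_contra hab
        simp only [Finset.mem_filter] at ha hb
        have hGF : G ⊆ F := by
          intro x hx
          by_cases hxa : x = a
          · exact hb.2 (Finset.mem_erase.2 ⟨by simpa [hxa] using hab, hx⟩)
          · exact ha.2 (Finset.mem_erase.2 ⟨hxa, hx⟩)
        have heq := Finset.eq_of_subset_of_card_le hGF (by rw [hG, hTk F hF])
        exact hGT (heq ▸ hF)
    _ = T.card := by simp
    _ ≤ 2 := hT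
  have hex : ∃ i ∈ G, i ∉ B := by
    by_contra hc
    push_neg at hc
    have hsub : G ⊆ B := fun x hx => hc x hx
    have := Finset.card_le_card hsub
    omega
  obtain ⟨i, hiG, hiB⟩ := hex
  have hVcard : (G.erase i).card = k - 1 := by rw [Finset.card_erase_of_mem hiG, hG]
  have hzero : ∀ f ∈ (fun F => bvec 𝔽 n k F) '' (T : Set (Finset (Fin n))),
      f ⟨G.erase i, hVcard⟩ = 0 := by
    rintro f ⟨F, hF, rfl⟩
    have hns : ¬ G.erase i ⊆ F := by
      intro hsubs
      exact hiB (Finset.mem_biUnion.2 ⟨F, hF, Finset.mem_filter.2 ⟨hiG, hsubs⟩⟩)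
    simp [bvec, inc_not_subset hns]
  have h0 := span_apply_zero _ ⟨G.erase i, hVcard⟩ hzero hmem
  have hne : bvec 𝔽 n k G (⟨G.erase i, hVcard⟩ : Csets n (k-1)) ≠ 0 := by
    simp only [bvec, inc_erase hiG]
    push_cast
    exact pow_ne_zero _ (neg_ne_zero.2 one_ne_zero)
  exact hne h0

lemma simRank_le_of_subset {X Y : Finset (Finset (Fin n))} (h : X ⊆ Y) :
    simRank 𝔽 n k X ≤ simRank 𝔽 n k Y :=
  Submodule.finrank_mono (Submodule.span_mono (Set.image_mono (by exact_mod_cast h)))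

lemma simRank_empty : simRank 𝔽 n k ∅ = 0 := by
  simp [simRank]

lemma simRank_insert {X : Finset (Finset (Fin n))} {F : Finset (Fin n)}
    (h : bvec 𝔽 n k F ∉
      Submodule.span 𝔽 ((fun G => bvec 𝔽 n k G) '' (X : Set (Finset (Fin n))))) :
    simRank 𝔽 n k (insert F X) = simRank 𝔽 n k X + 1 := by
  classical
  have hne : bvec 𝔽 n k F ≠ 0 := fun h0 => h (h0 ▸ Submodule.zero_mem _)
  unfold simRank
  rw [show ((insert F X : Finset (Finset (Fin n))) : Set (Finset (Fin n)))
      = insert F (X : Set (Finset (Fin n))) from Finset.coe_insert F X,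
    Set.image_insert_eq, Submodule.span_insert, sup_comm]
  have hdisj : Disjoint
      (Submodule.span 𝔽 ((fun G => bvec 𝔽 n k G) '' (X : Set (Finset (Fin n)))))
      (𝔽 ∙ bvec 𝔽 n k F) :=
    (Submodule.disjoint_span_singleton' hne).2 h
  have key := Submodule.finrank_sup_add_finrank_inf_eq
    (Submodule.span 𝔽 ((fun G => bvec 𝔽 n k G) '' (X : Set (Finset (Fin n)))))
    (𝔽 ∙ bvec 𝔽 n k F)
  rw [hdisj.eq_bot, finrank_bot, add_zero, finrank_span_singleton hne] at key
  exact key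

lemma span_simClosure (Sk X : Finset (Finset (Fin n))) (hX : X ⊆ Sk) :
    Submodule.span 𝔽
        ((fun G => bvec 𝔽 n k G) '' ((simClosure 𝔽 n k Sk X : Finset (Finset (Fin n))) :
          Set (Finset (Fin n)))) =
      Submodule.span 𝔽 ((fun G => bvec 𝔽 n k G) '' (X : Set (Finset (Fin n)))) := by
  classical
  apply le_antisymm
  · rw [Submodule.span_le]
    rintro f ⟨F, hF, rfl⟩
    have hF' : F ∈ simClosure 𝔽 n k Sk X := by exact_mod_cast hF
    simp only [simClosure, Finset.mem_filter] at hF'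
    exact hF'.2
  · apply Submodule.span_mono
    apply Set.image_mono
    intro F hF
    have hF' : F ∈ X := by exact_mod_cast hF
    have : F ∈ simClosure 𝔽 n k Sk X :=
      Finset.mem_filter.2
        ⟨hX hF', Submodule.subset_span (Set.mem_image_of_mem _ (Finset.mem_coe.2 hF'))⟩
    exact_mod_cast this

lemma simClosure_flat (Sk X : Finset (Finset (Fin n))) (hX : X ⊆ Sk) :
    SimFlat 𝔽 n k Sk (simClosure 𝔽 n k Sk X) := by
  classical
  refine ⟨Finset.filter_subset _ _, fun F hF hsp => ?_⟩
  rw [span_simClosure (𝔽 := 𝔽) Sk X hX] at hsp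
  exact Finset.mem_filter.2 ⟨hF, hsp⟩

end StmtNineHelpers

theorem stmt9 (𝔽 : Type*) [Field 𝔽] (n k : ℕ) (hk : 2 < k) (hkn : k ≤ n)
    (Sk : Finset (Finset (Fin n))) (hSk : ∀ F ∈ Sk, F.card = k)
    (H : Finset (Finset (Fin n))) (hH : SimHyperplane 𝔽 n k Sk H) :
    ModularFlat 𝔽 n k Sk H ↔ (Sk \ H).card = 1 := by
  classical
  obtain ⟨⟨hHsub, hHflat⟩, hHrank⟩ := hH
  constructor
  · rintro ⟨-, hmod⟩
    by_contra hcard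
    have hne : (Sk \ H).Nonempty := by
      rw [Finset.sdiff_nonempty]
      intro hsub
      have heq : H = Sk := Finset.Subset.antisymm hHsub hsub
      rw [heq] at hHrank
      omega
    have h2 : 1 < (Sk \ H).card := by
      have := Finset.card_pos.2 hne
      omega
    obtain ⟨F₁, hF₁, F₂, hF₂, hF12⟩ := Finset.one_lt_card.1 h2
    obtain ⟨hF₁S, hF₁H⟩ := Finset.mem_sdiff.1 hF₁
    obtain ⟨hF₂S, hF₂H⟩ := Finset.mem_sdiff.1 hF₂
    set T : Finset (Finset (Fin n)) := {F₁, F₂} with hT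
    have hTsub : T ⊆ Sk := by
      intro x hx
      rw [hT] at hx
      rcases Finset.mem_insert.1 hx with rfl | hx
      · exact hF₁S
      · rw [Finset.mem_singleton.1 hx]; exact hF₂S
    have hTk : ∀ F ∈ T, F.card = k := fun F hF => hSk F (hTsub hF)
    have hTcard : T.card ≤ 2 := by
      rw [hT]
      exact (Finset.card_insert_le _ _).trans (by simp)
    set Y := simClosure 𝔽 n k Sk T with hY
    have hYflat := simClosure_flat (𝔽 := 𝔽) (n := n) (k := k) Sk T hTsub
    have hYsub : Y ⊆ Sk := hYflat.1
    have hspanY := span_simClosure (𝔽 := 𝔽) (n := n) (k := k) Sk T hTsub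
    have hT2 : simRank 𝔽 n k T = 2 := by
      have h1 : simRank 𝔽 n k ({F₂} : Finset (Finset (Fin n))) = 1 := by
        have h0 := simRank_insert (𝔽 := 𝔽) (X := (∅ : Finset (Finset (Fin n)))) (F := F₂)
          (bvec_not_mem_span hk (by simp) (by simp) (hSk F₂ hF₂S) (by simp))
        simpa [simRank_empty] using h0
      have hnm : bvec 𝔽 n k F₁ ∉ Submodule.span 𝔽
          ((fun G => bvec 𝔽 n k G) ''
            (({F₂} : Finset (Finset (Fin n))) : Set (Finset (Fin n)))) :=
        bvec_not_mem_span hk (by simp) (by simp [hSk F₂ hF₂S]) (hSk F₁ hF₁S) (by simp [hF12])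
      have h3 := simRank_insert hnm
      rw [hT, show ({F₁, F₂} : Finset (Finset (Fin n))) = insert F₁ {F₂} from rfl, h3, h1]
    have hYrank : simRank 𝔽 n k Y = 2 := by
      unfold simRank
      rw [hY, hspanY]
      exact hT2
    have hHY : H ∩ Y = ∅ := by
      rw [Finset.eq_empty_iff_forall_notMem]
      intro G hG
      obtain ⟨hGH, hGY⟩ := Finset.mem_inter.1 hG
      have hGS : G ∈ Sk := hHsub hGH
      have hGT : G ∉ T := by
        intro hGT
        rw [hT] at hGT
        rcases Finset.mem_insert.1 hGT with rfl | h
        · exact hF₁H hGH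
        · rw [Finset.mem_singleton.1 h] at hGH
          exact hF₂H hGH
      rw [hY] at hGY
      exact bvec_not_mem_span hk hTcard hTk (hSk G hGS) hGT (Finset.mem_filter.1 hGY).2
    have hins : bvec 𝔽 n k F₁ ∉ Submodule.span 𝔽
        ((fun G => bvec 𝔽 n k G) '' (H : Set (Finset (Fin n)))) := by
      intro hm
      exact hF₁H (hHflat F₁ hF₁S hm)
    have hIns : simRank 𝔽 n k (insert F₁ H) = simRank 𝔽 n k H + 1 := simRank_insert hins
    have hF₁Y : F₁ ∈ Y := by
      rw [hY]
      exact Finset.mem_filter.2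
        ⟨hF₁S, Submodule.subset_span (Set.mem_image_of_mem _ (by simp [hT]))⟩
    have hUrank : simRank 𝔽 n k (H ∪ Y) = simRank 𝔽 n k Sk := by
      apply le_antisymm
      · exact simRank_le_of_subset (Finset.union_subset hHsub hYsub)
      · calc simRank 𝔽 n k Sk = simRank 𝔽 n k (insert F₁ H) := by rw [hIns, hHrank]
          _ ≤ simRank 𝔽 n k (H ∪ Y) := simRank_le_of_subset (by
              intro x hx
              rcases Finset.mem_insert.1 hx with rfl | h
              · exact Finset.mem_union_right _ hF₁Y
              · exact Finset.mem_union_left _ h)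
    have hmy := hmod Y hYflat
    rw [hUrank, hHY, simRank_empty, hYrank] at hmy
    omega
  · intro hcard
    obtain ⟨F₀, hF₀⟩ := Finset.card_eq_one.1 hcard
    have hF₀m : F₀ ∈ Sk \ H := by rw [hF₀]; exact Finset.mem_singleton_self F₀
    obtain ⟨hF₀S, hF₀H⟩ := Finset.mem_sdiff.1 hF₀m
    refine ⟨⟨hHsub, hHflat⟩, ?_⟩
    intro Y hYflat
    by_cases hFY : F₀ ∈ Y
    · have hHU : H ∪ Y = Sk := by
        apply Finset.Subset.antisymm
        · exact Finset.union_subset hHsub hYflat.1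
        · intro x hx
          by_cases hxH : x ∈ H
          · exact Finset.mem_union_left _ hxH
          · have hxm : x ∈ Sk \ H := Finset.mem_sdiff.2 ⟨hx, hxH⟩
            rw [hF₀] at hxm
            rw [Finset.mem_singleton.1 hxm]
            exact Finset.mem_union_right _ hFY
      have hHI : H ∩ Y = Y.erase F₀ := by
        ext x
        rw [Finset.mem_inter, Finset.mem_erase]
        constructor
        · rintro ⟨hxH, hxY⟩
          exact ⟨fun h => hF₀H (h ▸ hxH), hxY⟩
        · rintro ⟨hxne, hxY⟩
          refine ⟨?_, hxY⟩
          by_contra hxH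
          have hxm : x ∈ Sk \ H := Finset.mem_sdiff.2 ⟨hYflat.1 hxY, hxH⟩
          rw [hF₀] at hxm
          exact hxne (Finset.mem_singleton.1 hxm)
      have hEsub : Y.erase F₀ ⊆ H := by
        intro x hx
        obtain ⟨hxne, hxY⟩ := Finset.mem_erase.1 hx
        by_contra hxH
        have hxm : x ∈ Sk \ H := Finset.mem_sdiff.2 ⟨hYflat.1 hxY, hxH⟩
        rw [hF₀] at hxm
        exact hxne (Finset.mem_singleton.1 hxm)
      have hnot : bvec 𝔽 n k F₀ ∉ Submodule.span 𝔽
          ((fun G => bvec 𝔽 n k G) '' ((Y.erase F₀ : Finset (Finset (Fin n))) :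
            Set (Finset (Fin n)))) := by
        intro hm
        have hle : Submodule.span 𝔽
            ((fun G => bvec 𝔽 n k G) '' ((Y.erase F₀ : Finset (Finset (Fin n))) :
              Set (Finset (Fin n)))) ≤
            Submodule.span 𝔽 ((fun G => bvec 𝔽 n k G) '' (H : Set (Finset (Fin n)))) :=
          Submodule.span_mono (Set.image_mono (by exact_mod_cast hEsub))
        exact hF₀H (hHflat F₀ hF₀S (hle hm))
      have hYr : simRank 𝔽 n k Y = simRank 𝔽 n k (Y.erase F₀) + 1 := by
        conv_lhs => rw [← Finset.insert_erase hFY]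
        exact simRank_insert hnot
      rw [hHU, hHI, hYr]
      omega
    · have hYsubH : Y ⊆ H := by
        intro x hxY
        by_contra hxH
        have hxm : x ∈ Sk \ H := Finset.mem_sdiff.2 ⟨hYflat.1 hxY, hxH⟩
        rw [hF₀] at hxm
        exact hFY ((Finset.mem_singleton.1 hxm) ▸ hxY)
      rw [Finset.union_eq_left.2 hYsubH, Finset.inter_eq_right.2 hYsubH]
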